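/- Let 𝒳 = (Ω,S) be a thick coherent configuration. Then every basis relation s ∈ S can be written as a composition s = s_1·s_2·⋯·s_k of irredundant basis relations s_1,…,s_k ∈ S. -/
import Mathlib


open Set

def rcomp {Ω : Type*} (r s : Set (Ω × Ω)) : Set (Ω × Ω) :=
  {p | ∃ γ, (p.1, γ) ∈ r ∧ (γ, p.2) ∈ s}

def rconv {Ω : Type*} (r : Set (Ω × Ω)) : Set (Ω × Ω) := {p | (p.2, p.1) ∈ r}

def rdiag (Ω : Type*) : Set (Ω × Ω) := {p | p.1 = p.2}

def IsEquivRel {Ω : Type*} (e : Set (Ω × Ω)) : Prop :=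
  Equivalence (fun a b => (a, b) ∈ e)

/-- The smallest equivalence relation containing `r`. -/
def eqvClosure {Ω : Type*} (r : Set (Ω × Ω)) : Set (Ω × Ω) :=
  ⋂₀ {e | IsEquivRel e ∧ r ⊆ e}

/-- Join of two equivalence relations. -/
def rjoin {Ω : Type*} (e f : Set (Ω × Ω)) : Set (Ω × Ω) := eqvClosure (e ∪ f)

def IsClass {Ω : Type*} (e : Set (Ω × Ω)) (Δ : Set Ω) : Prop :=
  ∃ α, Δ = {β | (α, β) ∈ e}

def setoidRel {Ω : Type*} (e : Setoid Ω) : Set (Ω × Ω) := {p | e.r p.1 p.2}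

/-- The relation induced on the quotient `Ω/e` by a relation `r` on `Ω`. -/
def qmap {Ω : Type*} (e : Setoid Ω) (r : Set (Ω × Ω)) :
    Set (Quotient e × Quotient e) :=
  {p | ∃ a b : Ω, Quotient.mk e a = p.1 ∧ Quotient.mk e b = p.2 ∧ (a, b) ∈ r}

/-- Tensor product of relations. -/
def tensorRel {m : ℕ} {Ω : Fin m → Type*} (s : ∀ i, Set (Ω i × Ω i)) :
    Set ((∀ i, Ω i) × (∀ i, Ω i)) :=
  {p | ∀ i, (p.1 i, p.2 i) ∈ s i}

def tensor2 {Ω₁ Ω₂ : Type*} (s₁ : Set (Ω₁ × Ω₁)) (s₂ : Set (Ω₂ × Ω₂)) :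
    Set ((Ω₁ × Ω₂) × (Ω₁ × Ω₂)) :=
  {p | (p.1.1, p.2.1) ∈ s₁ ∧ (p.1.2, p.2.2) ∈ s₂}

/-- `PP e I` is the join of the equivalence relations `e i`, `i ∈ I`. -/
def PP {Ω : Type*} {m : ℕ} (e : Fin m → Set (Ω × Ω)) (I : Set (Fin m)) :
    Set (Ω × Ω) :=
  eqvClosure (⋃ i ∈ I, e i)

/-- An atomic Cartesian decomposition, given as a family of equivalence relations. -/
def IsACDfam {Ω : Type*} {m : ℕ} (e : Fin m → Set (Ω × Ω)) : Prop :=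
  0 < m ∧ (∀ i, IsEquivRel (e i)) ∧ (∀ i, e i ≠ rdiag Ω) ∧
  (∀ i j, rcomp (e i) (e j) = rcomp (e j) (e i)) ∧
  (∀ i, e i ∩ PP e ({i}ᶜ) = rdiag Ω) ∧
  (∀ i, rjoin (e i) (PP e ({i}ᶜ)) = Set.univ)

/-- Join of a set of relations. -/
def joinAll {Ω : Type*} (B : Set (Set (Ω × Ω))) : Set (Ω × Ω) := eqvClosure (⋃₀ B)

/-- The `P`-complement of `e`: the join of the members of `P` other than `e`. -/
def pcompl {Ω : Type*} (P : Set (Set (Ω × Ω))) (e : Set (Ω × Ω)) : Set (Ω × Ω) :=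
  joinAll (P \ {e})

/-- An atomic Cartesian decomposition, given as a set of equivalence relations. -/
def IsACD {Ω : Type*} (P : Set (Set (Ω × Ω))) : Prop :=
  P.Nonempty ∧ (∀ e ∈ P, IsEquivRel e ∧ e ≠ rdiag Ω) ∧
  (∀ e ∈ P, ∀ f ∈ P, rcomp e f = rcomp f e) ∧
  (∀ e ∈ P, e ∩ pcompl P e = rdiag Ω ∧ rjoin e (pcompl P e) = Set.univ)

def IsPartitionOf {α : Type*} (P : Set α) (C : Set (Set α)) : Prop :=
  (∀ B ∈ C, B.Nonempty) ∧ (∀ B ∈ C, ∀ B' ∈ C, B ≠ B' → Disjoint B B') ∧ ⋃₀ C = P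

/-- A coherent configuration on `Ω`. -/
structure CohCfg (Ω : Type*) where
  S : Set (Set (Ω × Ω))
  empty_not_mem : ∅ ∉ S
  cover : ∀ p : Ω × Ω, ∃ s ∈ S, p ∈ s
  pairwise_disjoint : ∀ s ∈ S, ∀ t ∈ S, s ≠ t → Disjoint s t
  diag_union : ∀ s ∈ S, (s ∩ rdiag Ω).Nonempty → s ⊆ rdiag Ω
  conv_mem : ∀ s ∈ S, rconv s ∈ S
  inter_const : ∀ r ∈ S, ∀ s ∈ S, ∀ t ∈ S, ∀ p ∈ t, ∀ q ∈ t,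
    ({γ : Ω | (p.1, γ) ∈ r ∧ (γ, p.2) ∈ s}).ncard
      = ({γ : Ω | (q.1, γ) ∈ r ∧ (γ, q.2) ∈ s}).ncard

/-- The valency of a basis relation (the common size of the rows over the left support). -/
noncomputable def valency {Ω : Type*} (s : Set (Ω × Ω)) : ℕ :=
  sSup ((fun α => ({β | (α, β) ∈ s} : Set Ω).ncard) '' {α | ∃ β, (α, β) ∈ s})

def IsThick {Ω : Type*} (X : CohCfg Ω) : Prop :=
  ∀ s ∈ X.S, Disjoint s (rdiag Ω) → ¬(valency s = 1 ∧ valency (rconv s) = 1)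

def IsParabolic {Ω : Type*} (X : CohCfg Ω) (e : Set (Ω × Ω)) : Prop :=
  IsEquivRel e ∧ ∀ s ∈ X.S, (s ∩ e).Nonempty → s ⊆ e

def Perp {Ω : Type*} (X : CohCfg Ω) (e f : Set (Ω × Ω)) : Prop :=
  ∀ x ∈ X.S, x ⊆ e → ∀ y ∈ X.S, y ⊆ f → (rcomp x y).Nonempty → rcomp x y ∈ X.S

def Redundant {Ω : Type*} (X : CohCfg Ω) (s : Set (Ω × Ω)) : Prop :=
  ∃ x ∈ X.S, ∃ y ∈ X.S, Disjoint x (rdiag Ω) ∧ Disjoint y (rdiag Ω) ∧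
    s = rcomp x y ∧ eqvClosure x ∩ eqvClosure y = rdiag Ω

section Aux

variable {Ω : Type*}

lemma eqvClosure_isEquiv (r : Set (Ω × Ω)) : IsEquivRel (eqvClosure r) := by
  constructor
  · intro a e he
    exact he.1.refl a
  · intro a b h e he
    exact he.1.symm (h e he)
  · intro a b c h1 h2 e he
    exact he.1.trans (h1 e he) (h2 e he)

lemma subset_eqvClosure (r : Set (Ω × Ω)) : r ⊆ eqvClosure r := by
  intro p hp e he
  exact he.2 hp

lemma eqvClosure_min {r e : Set (Ω × Ω)} (he : IsEquivRel e) (hre : r ⊆ e) :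
    eqvClosure r ⊆ e := fun p hp => hp e ⟨he, hre⟩

lemma eqvClosure_rconv (r : Set (Ω × Ω)) : eqvClosure (rconv r) = eqvClosure r := by
  have key : ∀ t : Set (Ω × Ω), eqvClosure (rconv t) ⊆ eqvClosure t := by
    intro t
    apply eqvClosure_min (eqvClosure_isEquiv t)
    intro p hp
    exact (eqvClosure_isEquiv t).symm (subset_eqvClosure t hp)
  have h2 := key (rconv r)
  have : rconv (rconv r) = r := rfl
  rw [this] at h2
  exact le_antisymm (key r) h2

lemma rcomp_assoc (a b c : Set (Ω × Ω)) :
    rcomp (rcomp a b) c = rcomp a (rcomp b c) := by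
  ext p
  constructor
  · rintro ⟨γ, ⟨δ, h1, h2⟩, h3⟩
    exact ⟨δ, h1, γ, h2, h3⟩
  · rintro ⟨δ, h1, γ, h2, h3⟩
    exact ⟨γ, ⟨δ, h1, h2⟩, h3⟩

lemma rcomp_rdiag (a : Set (Ω × Ω)) : rcomp a (rdiag Ω) = a := by
  ext ⟨α, β⟩
  constructor
  · rintro ⟨γ, h1, h2⟩
    have : γ = β := h2
    rwa [this] at h1
  · intro h
    exact ⟨β, h, rfl⟩

lemma rdiag_rcomp (a : Set (Ω × Ω)) : rcomp (rdiag Ω) a = a := by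
  ext ⟨α, β⟩
  constructor
  · rintro ⟨γ, h1, h2⟩
    have : α = γ := h1
    rwa [this]
  · intro h
    exact ⟨α, rfl, h⟩

lemma foldr_rcomp_append (l1 l2 : List (Set (Ω × Ω))) :
    (l1 ++ l2).foldr rcomp (rdiag Ω)
      = rcomp (l1.foldr rcomp (rdiag Ω)) (l2.foldr rcomp (rdiag Ω)) := by
  induction l1 with
  | nil => simp [rdiag_rcomp]
  | cons a l ih => simp [ih, rcomp_assoc]

lemma rconv_rcomp (a b : Set (Ω × Ω)) :
    rconv (rcomp a b) = rcomp (rconv b) (rconv a) := by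
  ext ⟨α, β⟩
  constructor
  · rintro ⟨γ, h1, h2⟩
    exact ⟨γ, h2, h1⟩
  · rintro ⟨γ, h1, h2⟩
    exact ⟨γ, h2, h1⟩

variable [Fintype Ω] (X : CohCfg Ω)

lemma mem_ne_empty {s : Set (Ω × Ω)} (hs : s ∈ X.S) : s.Nonempty := by
  rcases Set.eq_empty_or_nonempty s with h | h
  · exact absurd (h ▸ hs) X.empty_not_mem
  · exact h

/-- All nonempty rows of a basis relation have the same size. -/
lemma rows_const {y : Set (Ω × Ω)} (hy : y ∈ X.S) {β β' : Ω}
    (h1 : ({γ | (β, γ) ∈ y} : Set Ω).Nonempty)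
    (h2 : ({γ | (β', γ) ∈ y} : Set Ω).Nonempty) :
    ({γ | (β, γ) ∈ y} : Set Ω).ncard = ({γ | (β', γ) ∈ y} : Set Ω).ncard := by
  obtain ⟨γ, hγ⟩ := h1
  obtain ⟨γ', hγ'⟩ := h2
  -- the diagonal basis relation containing (β,β)
  obtain ⟨d, hd, hβd⟩ := X.cover (β, β)
  have hddiag : d ⊆ rdiag Ω := X.diag_union d hd ⟨(β, β), hβd, rfl⟩
  -- (β',β') ∈ d
  have hcount := X.inter_const d hd y hy y hy (β, γ) hγ (β', γ') hγ'
  dsimp only at hcount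
  have hone : ({δ : Ω | (β, δ) ∈ d ∧ (δ, γ) ∈ y} : Set Ω) = {β} := by
    ext δ
    simp only [Set.mem_setOf_eq, Set.mem_singleton_iff]
    constructor
    · rintro ⟨hd1, _⟩
      exact (hddiag hd1).symm
    · rintro rfl
      exact ⟨hβd, hγ⟩
  rw [hone, Set.ncard_singleton] at hcount
  have hne : ({δ : Ω | (β', δ) ∈ d ∧ (δ, γ') ∈ y} : Set Ω).Nonempty := by
    rw [← Set.ncard_pos (Set.toFinite _)]
    omega
  obtain ⟨δ, hδd, _⟩ := hne
  have hδ : δ = β' := (hddiag hδd).symm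
  have hβ'd : (β', β') ∈ d := hδ ▸ hδd
  -- now count rows via t = d
  have hmain := X.inter_const y hy (rconv y) (X.conv_mem y hy) d hd
    (β, β) hβd (β', β') hβ'd
  dsimp only at hmain
  have e1 : ({γ : Ω | (β, γ) ∈ y ∧ (γ, β) ∈ rconv y} : Set Ω)
      = {γ | (β, γ) ∈ y} := by
    ext γ; simp only [Set.mem_setOf_eq]; exact ⟨fun h => h.1, fun h => ⟨h, h⟩⟩
  have e2 : ({γ : Ω | (β', γ) ∈ y ∧ (γ, β') ∈ rconv y} : Set Ω)
      = {γ | (β', γ) ∈ y} := by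
    ext γ; simp only [Set.mem_setOf_eq]; exact ⟨fun h => h.1, fun h => ⟨h, h⟩⟩
  rwa [e1, e2] at hmain

lemma valency_eq_row {y : Set (Ω × Ω)} (hy : y ∈ X.S) {β : Ω}
    (h : ({γ | (β, γ) ∈ y} : Set Ω).Nonempty) :
    valency y = ({γ | (β, γ) ∈ y} : Set Ω).ncard := by
  have himg : ((fun α => ({γ | (α, γ) ∈ y} : Set Ω).ncard) '' {α | ∃ γ, (α, γ) ∈ y})
      = {({γ | (β, γ) ∈ y} : Set Ω).ncard} := by
    apply le_antisymm
    · rintro n ⟨α, hα, rfl⟩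
      exact rows_const X hy hα h
    · rintro n hn
      obtain ⟨γ, hγ⟩ := h
      exact ⟨β, ⟨γ, hγ⟩, hn.symm⟩
  rw [valency, himg, csSup_singleton]

lemma valency_pos {y : Set (Ω × Ω)} (hy : y ∈ X.S) : 0 < valency y := by
  obtain ⟨⟨β, γ⟩, hβγ⟩ := mem_ne_empty X hy
  have h : ({γ' | (β, γ') ∈ y} : Set Ω).Nonempty := ⟨γ, hβγ⟩
  rw [valency_eq_row X hy h]
  exact (Set.ncard_pos (Set.toFinite _)).mpr h

/-- The extension lemma: if some pair of x extends along y into s, all do. -/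
lemma extend_lemma {s x y : Set (Ω × Ω)} (hs : s ∈ X.S) (hx : x ∈ X.S)
    (hy : y ∈ X.S) {α₀ β₀ γ₀ : Ω} (h1 : (α₀, β₀) ∈ x) (h2 : (β₀, γ₀) ∈ y)
    (h3 : (α₀, γ₀) ∈ s) {α β : Ω} (hαβ : (α, β) ∈ x) :
    ∃ γ, (β, γ) ∈ y := by
  have hcount := X.inter_const s hs (rconv y) (X.conv_mem y hy) x hx
    (α₀, β₀) h1 (α, β) hαβ
  dsimp only at hcount
  have hne : ({γ : Ω | (α₀, γ) ∈ s ∧ (γ, β₀) ∈ rconv y} : Set Ω).Nonempty :=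
    ⟨γ₀, h3, h2⟩
  have hpos := (Set.ncard_pos (Set.toFinite _)).mpr hne
  rw [hcount] at hpos
  obtain ⟨γ, _, hγ2⟩ := (Set.ncard_pos (Set.toFinite _)).mp hpos
  exact ⟨γ, hγ2⟩

/-- Valency is multiplicative for redundant decompositions. -/
lemma valency_mult {s x y : Set (Ω × Ω)} (hs : s ∈ X.S) (hx : x ∈ X.S)
    (hy : y ∈ X.S) (hxy : s = rcomp x y)
    (hu : ∀ α β β' γ : Ω, (α, β) ∈ x → (β, γ) ∈ y → (α, β') ∈ x → (β', γ) ∈ y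
      → β = β') :
    valency s = valency x * valency y := by
  classical
  obtain ⟨⟨α₀, γ₀⟩, hs0⟩ := mem_ne_empty X hs
  have hs0' : (α₀, γ₀) ∈ rcomp x y := by rw [← hxy]; exact hs0
  obtain ⟨β₀, hxb, hyb⟩ : ∃ β₀, (α₀, β₀) ∈ x ∧ (β₀, γ₀) ∈ y := hs0'
  have hsrow : valency s = ({γ | (α₀, γ) ∈ s} : Set Ω).ncard :=
    valency_eq_row X hs ⟨γ₀, hs0⟩
  have hxrow : valency x = ({β | (α₀, β) ∈ x} : Set Ω).ncard :=
    valency_eq_row X hx ⟨β₀, hxb⟩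
  -- finset versions
  set A : Finset Ω := ({β | (α₀, β) ∈ x} : Set Ω).toFinset with hA
  have hxcard : valency x = A.card := by
    rw [hxrow, Set.ncard_eq_toFinset_card']
  have key : ∀ β ∈ A, (({γ | (β, γ) ∈ y} : Set Ω).toFinset).card = valency y := by
    intro β hβ
    have hβx : (α₀, β) ∈ x := by simpa [hA] using hβ
    obtain ⟨γ, hγ⟩ := extend_lemma X hs hx hy hxb hyb hs0 hβx
    rw [← Set.ncard_eq_toFinset_card']
    exact (valency_eq_row X hy ⟨γ, hγ⟩).symm
  have hdisj : ∀ β ∈ A, ∀ β' ∈ A, β ≠ β' →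
      Disjoint (({γ | (β, γ) ∈ y} : Set Ω).toFinset)
        (({γ | (β', γ) ∈ y} : Set Ω).toFinset) := by
    intro β hβ β' hβ' hne
    rw [Finset.disjoint_left]
    intro γ hγ hγ'
    have hβx : (α₀, β) ∈ x := by simpa [hA] using hβ
    have hβ'x : (α₀, β') ∈ x := by simpa [hA] using hβ'
    have h1 : (β, γ) ∈ y := by simpa using hγ
    have h2 : (β', γ) ∈ y := by simpa using hγ'
    exact hne (hu α₀ β β' γ hβx h1 hβ'x h2)
  have hunion : ({γ | (α₀, γ) ∈ s} : Set Ω).toFinset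
      = A.biUnion (fun β => ({γ | (β, γ) ∈ y} : Set Ω).toFinset) := by
    ext γ
    simp only [Set.mem_toFinset, Set.mem_setOf_eq, Finset.mem_biUnion, hA]
    constructor
    · intro h
      have h' : (α₀, γ) ∈ rcomp x y := by rw [← hxy]; exact h
      obtain ⟨β, hβ1, hβ2⟩ : ∃ β, (α₀, β) ∈ x ∧ (β, γ) ∈ y := h'
      exact ⟨β, by simpa using hβ1, by simpa using hβ2⟩
    · rintro ⟨β, hβ1, hβ2⟩
      have hβ1' : (α₀, β) ∈ x := by simpa using hβ1
      have hβ2' : (β, γ) ∈ y := by simpa using hβ2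
      show (α₀, γ) ∈ s
      rw [hxy]
      exact ⟨β, hβ1', hβ2'⟩
  rw [hsrow, Set.ncard_eq_toFinset_card', hunion, Finset.card_biUnion hdisj,
    Finset.sum_congr rfl key, Finset.sum_const, smul_eq_mul, ← hxcard,
    Nat.mul_comm]

lemma uniq_of_closure {x y : Set (Ω × Ω)}
    (h : eqvClosure x ∩ eqvClosure y = rdiag Ω) :
    ∀ α β β' γ : Ω, (α, β) ∈ x → (β, γ) ∈ y → (α, β') ∈ x → (β', γ) ∈ y
      → β = β' := by
  intro α β β' γ h1 h2 h3 h4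
  have hex := eqvClosure_isEquiv x
  have hey := eqvClosure_isEquiv y
  have hbx : (β, β') ∈ eqvClosure x :=
    hex.trans (hex.symm (subset_eqvClosure x h1)) (subset_eqvClosure x h3)
  have hby : (β, β') ∈ eqvClosure y :=
    hey.trans (subset_eqvClosure y h2) (hey.symm (subset_eqvClosure y h4))
  have : (β, β') ∈ rdiag Ω := h ▸ Set.mem_inter hbx hby
  exact this

/-- measure of a basis relation for the induction -/
noncomputable def cmeasure (s : Set (Ω × Ω)) : ℕ := valency s * valency (rconv s)

lemma stmt16_aux {Ω : Type*} [Fintype Ω] (X : CohCfg Ω) (hX : IsThick X) :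
    ∀ n : ℕ, ∀ s ∈ X.S, cmeasure s ≤ n →
    ∃ l : List (Set (Ω × Ω)), l ≠ [] ∧
      (∀ r ∈ l, r ∈ X.S ∧ ¬ Redundant X r) ∧
      s = l.foldr rcomp (rdiag Ω) := by
  intro n
  induction n with
  | zero =>
    intro s hs hm
    have h1 := valency_pos X hs
    have h2 := valency_pos X (X.conv_mem s hs)
    have : 0 < cmeasure s := Nat.mul_pos h1 h2
    omega
  | succ n ih =>
    intro s hs hm
    by_cases hr : Redundant X s
    · obtain ⟨x, hx, y, hy, hxd, hyd, hxy, hcl⟩ := hr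
      have hu := uniq_of_closure hcl
      -- converse decomposition
      have hconv : rconv s = rcomp (rconv y) (rconv x) := by
        rw [hxy, rconv_rcomp]
      have hclc : eqvClosure (rconv y) ∩ eqvClosure (rconv x) = rdiag Ω := by
        rw [eqvClosure_rconv, eqvClosure_rconv, Set.inter_comm]
        exact hcl
      have huc := uniq_of_closure hclc
      have hvs : valency s = valency x * valency y :=
        valency_mult X hs hx hy hxy hu
      have hvcs : valency (rconv s) = valency (rconv y) * valency (rconv x) :=
        valency_mult X (X.conv_mem s hs) (X.conv_mem y hy) (X.conv_mem x hx)
          hconv huc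
      have hmx : 0 < cmeasure x := Nat.mul_pos (valency_pos X hx)
        (valency_pos X (X.conv_mem x hx))
      have hmy : 0 < cmeasure y := Nat.mul_pos (valency_pos X hy)
        (valency_pos X (X.conv_mem y hy))
      have hthx : 2 ≤ cmeasure x := by
        have h := hX x hx hxd
        have h1 := valency_pos X hx
        have h2 := valency_pos X (X.conv_mem x hx)
        unfold cmeasure
        rcases Nat.lt_or_ge (valency x) 2 with hlt | hge
        · have hx1 : valency x = 1 := by omega
          have h3 : valency (rconv x) ≠ 1 := fun hcx => h ⟨hx1, hcx⟩
          have h4 : 2 ≤ valency (rconv x) := by omega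
          rw [hx1, one_mul]
          exact h4
        · nlinarith
      have hthy : 2 ≤ cmeasure y := by
        have h := hX y hy hyd
        have h1 := valency_pos X hy
        have h2 := valency_pos X (X.conv_mem y hy)
        unfold cmeasure
        rcases Nat.lt_or_ge (valency y) 2 with hlt | hge
        · have hy1 : valency y = 1 := by omega
          have h3 : valency (rconv y) ≠ 1 := fun hcy => h ⟨hy1, hcy⟩
          have h4 : 2 ≤ valency (rconv y) := by omega
          rw [hy1, one_mul]
          exact h4
        · nlinarith
      have hprod : cmeasure s = cmeasure x * cmeasure y := by
        unfold cmeasure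
        rw [hvs, hvcs]
        ring
      have hlex : cmeasure x ≤ n := by nlinarith
      have hley : cmeasure y ≤ n := by nlinarith
      obtain ⟨lx, hlx1, hlx2, hlx3⟩ := ih x hx hlex
      obtain ⟨ly, hly1, hly2, hly3⟩ := ih y hy hley
      refine ⟨lx ++ ly, by simp [hlx1], ?_, ?_⟩
      · intro r hr
        rcases List.mem_append.mp hr with h | h
        · exact hlx2 r h
        · exact hly2 r h
      · rw [foldr_rcomp_append, ← hlx3, ← hly3, hxy]
    · refine ⟨[s], by simp, ?_, by simp [rcomp_rdiag]⟩
      intro r hrl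
      rw [List.mem_singleton] at hrl
      subst hrl
      exact ⟨hs, hr⟩

end Aux

/-- in a thick coherent configuration, every basis relation is a
composition of irredundant basis relations. -/
theorem stmt16 {Ω : Type*} [Fintype Ω] (X : CohCfg Ω) (hX : IsThick X)
    (s : Set (Ω × Ω)) (hs : s ∈ X.S) :
    ∃ l : List (Set (Ω × Ω)), l ≠ [] ∧
      (∀ r ∈ l, r ∈ X.S ∧ ¬ Redundant X r) ∧
      s = l.foldr rcomp (rdiag Ω) := by
  exact stmt16_aux X hX (cmeasure s) s hs le_rfl
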